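/- For every R ≥ 0, the Nash effort matrix e*(z_NA(R)) equals the Pareto effort matrix with parameter 1/2, a*(z_Pe(1/2), 1/2), if and only if R = 0. -/
import Mathlib


/-- The Pareto-optimal sensitivities `z_Pe(λ)`. -/
noncomputable def zPe (k11 k12 k21 k22 lam : ℝ) : Fin 2 → Fin 2 → ℝ :=
  ![![(1 - lam) ^ 2 * k12 / (lam ^ 2 * k11 + (1 - lam) ^ 2 * k12),
      lam ^ 2 * k11 / (lam ^ 2 * k11 + (1 - lam) ^ 2 * k12)],
    ![(1 - lam) ^ 2 * k22 / (lam ^ 2 * k21 + (1 - lam) ^ 2 * k22),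
      lam ^ 2 * k21 / (lam ^ 2 * k21 + (1 - lam) ^ 2 * k22)]]

/-- The optimal sensitivities `z_NA(R)` in the no-Planner (Nash) model. -/
noncomputable def zNA (k11 k12 k21 k22 R : ℝ) : Fin 2 → Fin 2 → ℝ :=
  ![![(1 + R * k12) / (1 + R * (k11 + k12)), (1 + R * k11) / (1 + R * (k11 + k12))],
    ![(1 + R * k22) / (1 + R * (k21 + k22)), (1 + R * k21) / (1 + R * (k21 + k22))]]

/-- The Pareto effort matrix `a*(z, λ)`. -/
noncomputable def aStar (k11 k12 k21 k22 lam : ℝ) (z : Fin 2 → Fin 2 → ℝ) : Fin 2 → Fin 2 → ℝ :=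
  ![![(lam * z 0 0 + (1 - lam) * z 0 1) / (lam * k11),
      -((lam * z 0 0 + (1 - lam) * z 0 1) / ((1 - lam) * k12))],
    ![-((lam * z 1 0 + (1 - lam) * z 1 1) / (lam * k21)),
      (lam * z 1 0 + (1 - lam) * z 1 1) / ((1 - lam) * k22)]]

/-- The Nash effort matrix `e*(z)`. -/
noncomputable def eStar (k11 k12 k21 k22 : ℝ) (z : Fin 2 → Fin 2 → ℝ) : Fin 2 → Fin 2 → ℝ :=
  ![![z 0 0 / k11, -(z 0 1 / k12)], ![-(z 1 0 / k21), z 1 1 / k22]]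

/-- for every `R ≥ 0`, the Nash effort `e*(z_NA(R))` equals the Pareto effort
with parameter `1/2`, `a*(z_Pe(1/2), 1/2)`, iff `R = 0`. -/
theorem nash_is_pareto_half_iff_risk_neutral (k11 k12 k21 k22 : ℝ)
    (hk11 : 0 < k11) (hk12 : 0 < k12) (hk21 : 0 < k21) (hk22 : 0 < k22)
    (R : ℝ) (hR : 0 ≤ R) :
    eStar k11 k12 k21 k22 (zNA k11 k12 k21 k22 R)
        = aStar k11 k12 k21 k22 (1 / 2) (zPe k11 k12 k21 k22 (1 / 2)) ↔ R = 0 := by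
  have hd1 : (0:ℝ) < 1 + R * (k11 + k12) := by positivity
  have hd2 : (0:ℝ) < 1 + R * (k21 + k22) := by positivity
  constructor
  · intro h
    have h00 := congrFun (congrFun h 0) 0
    simp only [eStar, aStar, zNA, zPe] at h00
    norm_num [Matrix.cons_val_zero, Matrix.cons_val_one] at h00
    -- h00 : (1 + R*k12)/(1 + R*(k11+k12)) / k11 = ...
    field_simp at h00
    by_contra hne
    have hRpos : 0 < R := hR.lt_of_ne (Ne.symm hne)
    nlinarith [mul_pos (mul_pos hRpos hk11) (mul_pos hk11 (add_pos hk11 hk12))]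
  · rintro rfl
    funext i j
    fin_cases i <;> fin_cases j <;>
      simp [eStar, aStar, zNA, zPe] <;> field_simp <;> ring
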